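/- For every even integer N ≥ 2, the quadratic Gauss sum satisfies ∑_{p=0}^{N−1} exp(iπp²/N) = √N · exp(iπ/4). -/

import Mathlib

open Complex Finset Filter Real Topology


lemma theta_bound {z τ : ℂ} (hz : z.im = 0) (hτ : 0 < τ.im) :
    ‖jacobiTheta₂ z τ - 1‖ ≤ 3 / (1 - rexp (-π * τ.im)) * rexp (-π * τ.im) := by
  set e : ℝ := rexp (-π * τ.im) with he
  have he1 : e < 1 := by
    rw [he, Real.exp_lt_one_iff]
    exact mul_neg_of_neg_of_pos (neg_lt_zero.mpr Real.pi_pos) hτ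
  have he0 : 0 < e := Real.exp_pos _
  have h1e : 0 < 1 - e := by linarith
  set f : ℤ → ℂ := fun n => jacobiTheta₂_term n z τ with hf
  have hnorm : ∀ n : ℤ, ‖f n‖ = rexp (-π * n ^ 2 * τ.im) := by
    intro n
    rw [hf, norm_jacobiTheta₂_term, hz]
    ring_nf
  have hle : ∀ n : ℤ, n ≠ 0 → ‖f n‖ ≤ e ^ n.natAbs := by
    intro n hn
    rw [hnorm, he, ← Real.exp_nat_mul]
    apply Real.exp_le_exp.2
    have hna : (1:ℝ) ≤ (n.natAbs : ℝ) := by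
      have : 1 ≤ n.natAbs := by omega
      exact_mod_cast this
    have h1 : ((n.natAbs : ℝ)) ≤ (n:ℝ) ^ 2 := by
      have h2 : ((n.natAbs:ℝ))^2 = (n:ℝ)^2 := by
        push_cast [Nat.cast_natAbs]; rw [_root_.sq_abs]
      nlinarith
    nlinarith [Real.pi_pos, hτ, mul_le_mul_of_nonneg_right h1
      (mul_pos Real.pi_pos hτ).le]
  have hsum : HasSum f (jacobiTheta₂ z τ) := hasSum_jacobiTheta₂_term z hτ
  have hF : HasSum (fun n : ℕ => f n + f (-(n+1))) (jacobiTheta₂ z τ) := hsum.nat_add_neg_add_one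
  set F : ℕ → ℂ := fun n => f n + f (-(n+1)) with hFdef
  have hF1 : HasSum (fun n : ℕ => F (n+1)) (jacobiTheta₂ z τ - F 0) := by
    rw [← hasSum_nat_add_iff' 1] at hF
    simpa using hF
  have hf0 : f 0 = 1 := by
    simp [hf, jacobiTheta₂_term]
  have hgeom : HasSum (fun n : ℕ => 2 * e ^ (n+1)) (2 * (e / (1 - e))) := by
    apply HasSum.mul_left
    simpa [pow_succ', div_eq_mul_inv, mul_comm] using
      (hasSum_geometric_of_lt_one he0.le he1).mul_left e
  have hFb : ∀ n : ℕ, ‖F (n+1)‖ ≤ 2 * e ^ (n+1) := by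
    intro n
    have h1 : ‖f ((n:ℤ)+1)‖ ≤ e ^ (n+1) := by
      have := hle ((n:ℤ)+1) (by omega)
      have hnab : ((n:ℤ)+1).natAbs = n + 1 := by omega
      rwa [hnab] at this
    have h2 : ‖f (-(((n:ℤ)+1)+1))‖ ≤ e ^ (n+1) := by
      have h3 := hle (-(((n:ℤ)+1)+1)) (by omega)
      have h4 : (-(((n:ℤ)+1)+1)).natAbs = n + 2 := by omega
      rw [h4] at h3
      calc ‖f (-(((n:ℤ)+1)+1))‖ ≤ e ^ (n+2) := h3
        _ ≤ e ^ (n+1) := pow_le_pow_of_le_one he0.le he1.le (by omega)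
    calc ‖F (n+1)‖ = ‖f ((n:ℤ)+1) + f (-(((n:ℤ)+1)+1))‖ := by
          rw [hFdef]; push_cast; ring_nf
      _ ≤ ‖f ((n:ℤ)+1)‖ + ‖f (-(((n:ℤ)+1)+1))‖ := norm_add_le _ _
      _ ≤ 2 * e ^ (n+1) := by linarith
  have hsummable : Summable (fun n : ℕ => ‖F (n+1)‖) :=
    Summable.of_nonneg_of_le (fun n => norm_nonneg _) hFb hgeom.summable
  have hb : ‖jacobiTheta₂ z τ - F 0‖ ≤ 2 * (e / (1 - e)) := by
    rw [← hF1.tsum_eq]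
    calc ‖∑' n : ℕ, F (n+1)‖ ≤ ∑' n : ℕ, ‖F (n+1)‖ := norm_tsum_le_tsum_norm hsummable
      _ ≤ ∑' n : ℕ, 2 * e ^ (n+1) := Summable.tsum_mono hsummable hgeom.summable hFb
      _ = 2 * (e / (1 - e)) := hgeom.tsum_eq
  have hfneg1 : ‖f (-1)‖ ≤ e := by simpa using hle (-1) (by norm_num)
  have key : ‖jacobiTheta₂ z τ - 1‖ ≤ 2 * (e / (1 - e)) + e := by
    have heq : jacobiTheta₂ z τ - 1 = (jacobiTheta₂ z τ - F 0) + f (-1) := by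
      rw [hFdef]; simp only [Nat.cast_zero, zero_add, hf0]; ring
    rw [heq]
    exact (norm_add_le _ _).trans (by linarith)
  have hfin : 2 * (e / (1 - e)) + e ≤ 3 / (1 - e) * e := by
    have hc : e / (1 - e) * (1 - e) = e := div_mul_cancel₀ _ h1e.ne'
    rw [div_mul_eq_mul_div, le_div_iff₀ h1e]
    nlinarith
  linarith

lemma theta_tendsto {α : Type*} {l : Filter α} {z : α → ℂ} {σ : α → ℂ}
    (hz : ∀ a, (z a).im = 0)
    (h : Tendsto (fun a => (σ a).im) l atTop) :
    Tendsto (fun a => jacobiTheta₂ (z a) (σ a)) l (𝓝 1) := by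
  rw [← tendsto_sub_nhds_zero_iff]
  have h2 : Tendsto (fun a => rexp (-π * (σ a).im)) l (𝓝 0) := by
    apply Real.tendsto_exp_atBot.comp
    exact (tendsto_neg_atBot_iff.2 (h.const_mul_atTop Real.pi_pos)).congr (by intro a; ring)
  have h3 : Tendsto (fun a => 3 / (1 - rexp (-π * (σ a).im))) l (𝓝 (3 / (1 - 0))) :=
    tendsto_const_nhds.div (tendsto_const_nhds.sub h2) (by norm_num)
  exact squeeze_zero_norm'
    (by filter_upwards [h.eventually_gt_atTop 0] with a ha; exact theta_bound (hz a) ha)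
    (by simpa using h3.mul h2)


lemma cpow_ofReal_mul {t : ℝ} (ht : 0 < t) {z : ℂ} (hz : z ≠ 0) (s : ℂ) :
    ((t : ℂ) * z) ^ s = (t : ℂ) ^ s * z ^ s := by
  have htz : (t:ℂ) * z ≠ 0 := mul_ne_zero (by exact_mod_cast ht.ne') hz
  rw [Complex.cpow_def_of_ne_zero htz, Complex.cpow_def_of_ne_zero (by exact_mod_cast ht.ne'),
    Complex.cpow_def_of_ne_zero hz, Complex.log_ofReal_mul ht hz, ← Complex.exp_add,
    Complex.ofReal_log ht.le]
  ring_nf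

lemma theta_add_two_nat (z τ : ℂ) (k : ℕ) : jacobiTheta₂ z (τ + 2 * k) = jacobiTheta₂ z τ := by
  induction k with
  | zero => simp
  | succ n ih => rw [← ih]; push_cast; rw [← jacobiTheta₂_add_right z (τ + 2*n)]; ring_nf

lemma negI_cpow : ((-I : ℂ)) ^ (-(1/2) : ℂ) = Complex.exp (π * I / 4) := by
  rw [Complex.cpow_def_of_ne_zero (by simp), Complex.log_neg_I]
  ring_nf

-- (t:ℂ)^(1/2) = Real.sqrt t and inverse cancellation
lemma sqrt_mul_cpow {t : ℝ} (ht : 0 < t) :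
    (Real.sqrt t : ℂ) * (t : ℂ) ^ (-(1/2) : ℂ) = 1 := by
  have h1 : ((t:ℂ)) ^ (-(1/2) : ℂ) = ((t ^ (-(1/2):ℝ) : ℝ) : ℂ) := by
    rw [show (-(1/2) : ℂ) = ((-(1/2):ℝ) : ℂ) by norm_num, Complex.ofReal_cpow ht.le]
  rw [h1, Real.sqrt_eq_rpow, ← Complex.ofReal_mul, ← Real.rpow_add ht]
  norm_num


lemma identA (N : ℕ) (hN : 0 < N) {t : ℝ} (ht : 0 < t) :
    jacobiTheta₂ 0 (1/(N:ℂ) + t*I)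
      = (((2*N : ℝ) * Real.sqrt t : ℝ) : ℂ)⁻¹ *
        ∑ r ∈ Finset.range (2*N),
          Complex.exp ((π:ℂ) * I * r^2 / N) * jacobiTheta₂ ((r:ℂ)/(2*N)) (I/(4*N^2*t)) := by
  have hNC : (N:ℂ) ≠ 0 := by exact_mod_cast hN.ne'
  have htC : (t:ℂ) ≠ 0 := by exact_mod_cast ht.ne'
  set τ : ℂ := 1/(N:ℂ) + t*I with hτdef
  have hτ : 0 < τ.im := by
    simp [hτdef]
    positivity
  haveI : NeZero (2*N) := ⟨by omega⟩
  set g : ℤ → ℂ := fun n => jacobiTheta₂_term n 0 τ with hg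
  have hsum : Summable g := (summable_jacobiTheta₂_term_iff 0 τ).2 hτ
  have h0 : jacobiTheta₂ 0 τ = ∑' n : ℤ, g n := rfl
  set E : Fin (2*N) × ℤ ≃ ℤ :=
    (Equiv.prodComm (Fin (2*N)) ℤ).trans (Int.divModEquiv (2*N)).symm with hE
  have h1 : jacobiTheta₂ 0 τ = ∑' p : Fin (2*N) × ℤ, g (p.2 * (2*N) + (p.1 : ℤ)) := by
    rw [h0, ← E.tsum_eq g]
    exact tsum_congr fun p => rfl
  have hsum2 : Summable fun p : Fin (2*N) × ℤ => g (p.2 * (2*N) + (p.1 : ℤ)) :=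
    (E.summable_iff (f := g)).2 hsum
  have h2 : jacobiTheta₂ 0 τ
      = ∑ r : Fin (2*N), ∑' q : ℤ, g (q * (2*N) + (r : ℤ)) := by
    rw [h1, Summable.tsum_prod' hsum2 (fun r => (hsum2.prod_factor r)), tsum_fintype]
  -- inner sum evaluation, for r : ℕ
  have h3 : ∀ r : ℕ,
      (∑' q : ℤ, g (q * (2*N) + (r : ℤ)))
        = Complex.exp ((π:ℂ) * I * r^2 / N) * Complex.exp ((π:ℂ) * I * (t*I) * r^2) *
          jacobiTheta₂ (2*N*r*(t*I)) (4*N^2*(t*I)) := by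
    intro r
    have hterm : ∀ q : ℤ, g (q * (2*N) + (r : ℤ))
        = Complex.exp ((π:ℂ) * I * r^2 / N) * Complex.exp ((π:ℂ) * I * (t*I) * r^2) *
          jacobiTheta₂_term q (2*N*r*(t*I)) (4*N^2*(t*I)) := by
      intro q
      rw [hg]
      simp only [jacobiTheta₂_term]
      push_cast
      rw [mul_zero, zero_add, ← Complex.exp_add, ← Complex.exp_add]
      have key : (π:ℂ) * I * ((q:ℂ) * (2*N) + r)^2 * τ
          = ((2*N*q^2 + 2*q*r : ℤ) : ℂ) * (2*π*I)
            + ((π:ℂ) * I * r^2 / N + ((π:ℂ) * I * (t*I) * r^2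
              + (2*π*I*q*(2*N*r*(t*I)) + π*I*q^2*(4*N^2*(t*I))))) := by
        rw [hτdef]
        push_cast
        field_simp
        ring
      rw [key, Complex.exp_add, Complex.exp_int_mul_two_pi_mul_I, one_mul]
      ring_nf
    rw [tsum_congr hterm, tsum_mul_left]
    rfl
  -- functional equation for the inner theta
  have h4 : ∀ r : ℕ,
      Complex.exp ((π:ℂ) * I * (t*I) * r^2) * jacobiTheta₂ ((2:ℂ)*N*r*(t*I)) (4*N^2*(t*I))
        = (((2*N : ℝ) * Real.sqrt t : ℝ) : ℂ)⁻¹ *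
          jacobiTheta₂ ((r:ℂ)/(2*N)) (I/(4*N^2*t)) := by
    intro r
    rw [jacobiTheta₂_functional_equation ((2:ℂ)*N*r*(t*I)) (4*N^2*(t*I))]
    have e1 : ((2:ℂ)*N*r*(t*I)) / (4*N^2*(t*I)) = (r:ℂ)/(2*N) := by
      field_simp
      ring
    have e2 : (-1 : ℂ)/(4*N^2*(t*I)) = I/(4*N^2*t) := by
      rw [div_eq_div_iff (by simp [hNC, htC, I_ne_zero]) (by simp [hNC, htC])]
      ring_nf
      rw [I_sq]
      ring
    have e3 : (-I:ℂ) * (4*N^2*(t*I)) = ((4*N^2*t : ℝ) : ℂ) := by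
      push_cast
      ring_nf
      rw [I_sq]
      ring
    have e4 : ((4*N^2*t : ℝ)) ^ ((1:ℝ)/2) = (2*N) * Real.sqrt t := by
      rw [← Real.sqrt_eq_rpow, show (4*(N:ℝ)^2*t) = (2*N)^2 * t by ring,
        Real.sqrt_mul (by positivity), Real.sqrt_sq (by positivity)]
    have e5 : (1:ℂ) / ((-I:ℂ) * (4*N^2*(t*I))) ^ ((1:ℂ)/2)
        = (((2*N : ℝ) * Real.sqrt t : ℝ) : ℂ)⁻¹ := by
      rw [e3, show ((1:ℂ)/2) = (((1:ℝ)/2 : ℝ) : ℂ) by norm_num,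
        ← Complex.ofReal_cpow (by positivity) ((1:ℝ)/2), e4, one_div]
    have e6 : Complex.exp ((π:ℂ) * I * (t*I) * r^2) *
        Complex.exp (-(π:ℂ) * I * ((2:ℂ)*N*r*(t*I))^2 / (4*N^2*(t*I))) = 1 := by
      rw [← Complex.exp_add, ← Complex.exp_zero]
      congr 1
      field_simp
      ring
    rw [e1, e2, e5]
    calc cexp ((π:ℂ) * I * (t*I) * r^2) *
          ((((2*N : ℝ) * Real.sqrt t : ℝ) : ℂ)⁻¹ *
            cexp (-(π:ℂ) * I * ((2:ℂ)*N*r*(t*I))^2 / (4*N^2*(t*I))) *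
            jacobiTheta₂ ((r:ℂ)/(2*N)) (I/(4*N^2*t)))
        = (cexp ((π:ℂ) * I * (t*I) * r^2) *
            cexp (-(π:ℂ) * I * ((2:ℂ)*N*r*(t*I))^2 / (4*N^2*(t*I)))) *
          ((((2*N : ℝ) * Real.sqrt t : ℝ) : ℂ)⁻¹ *
            jacobiTheta₂ ((r:ℂ)/(2*N)) (I/(4*N^2*t))) := by ring
      _ = _ := by rw [e6, one_mul]
  -- combine
  rw [h2]
  rw [Finset.mul_sum]
  rw [Fin.sum_univ_eq_sum_range (fun r => ∑' q : ℤ, g (q * (2*N) + (r : ℤ)))]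
  apply Finset.sum_congr rfl
  intro r _
  rw [h3 r, mul_assoc, h4 r]
  ring

lemma identB (N : ℕ) (hN : 0 < N) (hNe : Even N) {t : ℝ} (ht : 0 < t) :
    jacobiTheta₂ 0 (1/(N:ℂ) + t*I)
      = (-I * (1/(N:ℂ) + t*I)) ^ (-(1/2) : ℂ) *
        ((t:ℂ) * ((N:ℂ)^2 / (1 + I*N*t))) ^ (-(1/2) : ℂ) *
        jacobiTheta₂ 0 (-(1/(N:ℂ)) + I/((N:ℂ)^2*t)) := by
  have hNC : (N:ℂ) ≠ 0 := by exact_mod_cast hN.ne'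
  have htC : (t:ℂ) ≠ 0 := by exact_mod_cast ht.ne'
  have hden : (1 : ℂ) + I*N*t ≠ 0 := by
    intro h
    have := congrArg Complex.re h
    simp at this
  set τ : ℂ := 1/(N:ℂ) + t*I with hτdef
  set w : ℂ := I*(N:ℂ)^2*t / (1 + I*N*t) with hwdef
  -- step 1: θ(τ) = (-Iτ)^(-1/2) θ(-1/τ)
  have s1 : jacobiTheta₂ 0 τ = (-I * τ) ^ (-(1/2):ℂ) * jacobiTheta₂ 0 (-1/τ) := by
    rw [jacobiTheta₂_functional_equation 0 τ]
    simp [Complex.cpow_neg, one_div, zero_div, zero_pow]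
  -- step 2: -1/τ = -N + w, and -N = w - 2*(N/2)
  have hτne : τ ≠ 0 := by
    intro h
    have := congrArg Complex.im h
    simp [hτdef] at this
    exact ht.ne' this
  have s2 : (-1:ℂ)/τ = w - N := by
    rw [div_eq_iff hτne, hτdef, hwdef]
    field_simp
    ring
  obtain ⟨k, hk⟩ := hNe
  have s3 : jacobiTheta₂ 0 w = jacobiTheta₂ 0 ((-1:ℂ)/τ) := by
    have hw : w = (w - N) + 2*(k:ℕ) := by push_cast [hk]; ring
    rw [s2]
    conv_lhs => rw [hw]
    exact theta_add_two_nat 0 (w - N) k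
  -- step 3: θ(w) = (-Iw)^(-1/2) θ(-1/w)
  have hwne : w ≠ 0 := by
    rw [hwdef]
    apply div_ne_zero _ hden
    simp [hNC, htC, I_ne_zero]
  have s4 : jacobiTheta₂ 0 w = (-I * w) ^ (-(1/2):ℂ) * jacobiTheta₂ 0 (-1/w) := by
    rw [jacobiTheta₂_functional_equation 0 w]
    simp [Complex.cpow_neg, one_div, zero_div, zero_pow]
  have s5 : (-1:ℂ)/w = -(1/(N:ℂ)) + I/((N:ℂ)^2*t) := by
    rw [div_eq_iff hwne, hwdef, ← mul_div_assoc, eq_div_iff hden]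
    field_simp
    ring_nf
    rw [I_sq]
    ring
  have s6 : (-I : ℂ) * w = (t:ℂ) * ((N:ℂ)^2 / (1 + I*N*t)) := by
    rw [hwdef, ← mul_div_assoc, ← mul_div_assoc, div_eq_div_iff hden hden]
    ring_nf
    simp only [Complex.I_sq, show (I:ℂ)^3 = -I by rw [pow_succ, Complex.I_sq]; ring]
    ring
  rw [s1, ← s3, s4, s5, s6]
  ring


theorem gauss_sum_even (N : ℕ) (hN : 2 ≤ N) (hNe : Even N) :
    ∑ p ∈ Finset.range N,
        Complex.exp (Real.pi * Complex.I * (p : ℂ) ^ 2 / (N : ℂ))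
      = (Real.sqrt N : ℂ) * Complex.exp (Real.pi * Complex.I / 4) := by
  have hNpos : 0 < N := by omega
  have hNR : (0:ℝ) < N := by exact_mod_cast hNpos
  have hNC : (N:ℂ) ≠ 0 := by exact_mod_cast hNpos.ne'
  set l : Filter ℝ := nhdsWithin 0 (Set.Ioi 0) with hl
  set Φ : ℝ → ℂ := fun t =>
    (((2*N : ℝ) * Real.sqrt t : ℝ) : ℂ) * jacobiTheta₂ 0 (1/(N:ℂ) + t*I) with hΦ
  -- generic: c*t → 0 within Ioi, so (c*t)⁻¹ → ∞
  have hinv : ∀ c : ℝ, 0 < c → Tendsto (fun t : ℝ => (c*t)⁻¹) l atTop := by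
    intro c hc
    apply tendsto_inv_nhdsGT_zero.comp
    rw [hl]
    apply tendsto_nhdsWithin_of_tendsto_nhds_of_eventually_within
    · have : Tendsto (fun t : ℝ => c*t) (nhdsWithin 0 (Set.Ioi 0)) (𝓝 (c*0)) :=
        ((continuous_const.mul continuous_id).tendsto 0).mono_left nhdsWithin_le_nhds
      simpa using this
    · filter_upwards [self_mem_nhdsWithin] with t ht
      exact Set.mem_Ioi.2 (mul_pos hc ht)
  -- limit A
  have limA : Tendsto Φ l (𝓝 (∑ r ∈ Finset.range (2*N),
      Complex.exp ((π:ℂ) * I * r^2 / N))) := by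
    have heq : Φ =ᶠ[l] fun t => ∑ r ∈ Finset.range (2*N),
        Complex.exp ((π:ℂ) * I * r^2 / N) * jacobiTheta₂ ((r:ℂ)/(2*N)) (I/(4*N^2*t)) := by
      filter_upwards [self_mem_nhdsWithin] with t ht
      have ht' : (0:ℝ) < t := ht
      have hc : (((2*N : ℝ) * Real.sqrt t : ℝ) : ℂ) ≠ 0 := by
        have : (0:ℝ) < (2*N) * Real.sqrt t := by positivity
        exact_mod_cast this.ne'
      show (((2*N : ℝ) * Real.sqrt t : ℝ) : ℂ) * jacobiTheta₂ 0 (1/(N:ℂ) + t*I) = _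
      rw [identA N hNpos ht', ← mul_assoc, mul_inv_cancel₀ hc, one_mul]
    apply Tendsto.congr' heq.symm
    apply tendsto_finset_sum
    intro r _
    have h1 : Tendsto (fun t : ℝ => jacobiTheta₂ ((r:ℂ)/(2*N)) (I/(4*N^2*t))) l (𝓝 1) := by
      apply theta_tendsto (z := fun _ => (r:ℂ)/(2*N))
      · intro a
        have : ((r:ℂ)/(2*N)) = (((r:ℝ)/(2*N) : ℝ) : ℂ) := by push_cast; ring
        rw [this, Complex.ofReal_im]
      · apply (hinv (4*N^2) (by positivity)).congr'
        filter_upwards [self_mem_nhdsWithin] with t ht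
        have ht' : (0:ℝ) < t := ht
        have h4 : (I/((4:ℂ)*N^2*t)) = (((4*(N:ℝ)^2*t)⁻¹ : ℝ) : ℂ) * I := by
          have h5 : ((4:ℂ)*N^2*t) = (((4*(N:ℝ)^2*t) : ℝ):ℂ) := by push_cast; ring
          rw [h5, div_eq_mul_inv, mul_comm, ← Complex.ofReal_inv]
        show (4*(N:ℝ)^2*t)⁻¹ = (I/((4:ℂ)*N^2*t)).im
        rw [h4, Complex.mul_I_im, Complex.ofReal_re]
    simpa using tendsto_const_nhds.mul h1
  -- limit B
  have limB : Tendsto Φ l (𝓝 ((2*N : ℂ) * ((-I/(N:ℂ)) ^ (-(1/2) : ℂ)) *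
      (((N:ℂ)^2) ^ (-(1/2) : ℂ)))) := by
    have heq : Φ =ᶠ[l] fun t => (2*N : ℂ) * ((-I * (1/(N:ℂ) + t*I)) ^ (-(1/2):ℂ)) *
        (((N:ℂ)^2 / (1 + I*N*t)) ^ (-(1/2):ℂ)) *
        jacobiTheta₂ 0 (-(1/(N:ℂ)) + I/((N:ℂ)^2*t)) := by
      filter_upwards [self_mem_nhdsWithin] with t ht
      have ht' : (0:ℝ) < t := ht
      have hvne : ((N:ℂ)^2 / (1 + I*N*t)) ≠ 0 := by
        apply div_ne_zero (pow_ne_zero _ hNC)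
        intro h
        have := congrArg Complex.re h
        simp at this
      show (((2*N : ℝ) * Real.sqrt t : ℝ) : ℂ) * jacobiTheta₂ 0 (1/(N:ℂ) + t*I) = _
      rw [identB N hNpos hNe ht', cpow_ofReal_mul ht' hvne]
      push_cast
      have hs := sqrt_mul_cpow ht'
      calc (2*(N:ℂ) * (Real.sqrt t : ℂ)) *
            ((-I * (1/(N:ℂ) + t*I)) ^ (-(1/2):ℂ) *
              ((t:ℂ) ^ (-(1/2):ℂ) * ((N:ℂ)^2 / (1 + I*N*t)) ^ (-(1/2):ℂ)) *
              jacobiTheta₂ 0 (-(1/(N:ℂ)) + I/((N:ℂ)^2*t)))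
          = ((Real.sqrt t : ℂ) * (t:ℂ) ^ (-(1/2):ℂ)) *
            ((2*(N:ℂ)) * ((-I * (1/(N:ℂ) + t*I)) ^ (-(1/2):ℂ)) *
              (((N:ℂ)^2 / (1 + I*N*t)) ^ (-(1/2):ℂ)) *
              jacobiTheta₂ 0 (-(1/(N:ℂ)) + I/((N:ℂ)^2*t))) := by ring
        _ = _ := by rw [hs, one_mul]
    apply Tendsto.congr' heq.symm
    have hb1 : Tendsto (fun t : ℝ => (-I * (1/(N:ℂ) + t*I)) ^ (-(1/2):ℂ)) l
        (𝓝 ((-I/(N:ℂ)) ^ (-(1/2):ℂ))) := by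
      have hc : ContinuousAt (fun z : ℂ => z ^ (-(1/2):ℂ)) (-I/(N:ℂ)) := by
        apply continuousAt_cpow_const
        rw [Complex.mem_slitPlane_iff]
        right
        have : (-I/(N:ℂ)) = (((-(1:ℝ)/N : ℝ)) : ℂ) * I := by push_cast; ring
        rw [this]
        simp [hNR.ne']
      have hcont : Tendsto (fun t : ℝ => -I * (1/(N:ℂ) + t*I)) l (𝓝 (-I/(N:ℂ))) := by
        have : Tendsto (fun t : ℝ => -I * (1/(N:ℂ) + t*I)) (𝓝 0) (𝓝 (-I * (1/(N:ℂ) + (0:ℝ)*I))) := by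
          apply Tendsto.const_mul
          apply Tendsto.const_add
          exact (Complex.continuous_ofReal.tendsto 0).mul_const I
        rw [hl]
        apply Tendsto.mono_left _ nhdsWithin_le_nhds
        convert this using 2
        push_cast
        ring
      exact hc.tendsto.comp hcont
    have hb2 : Tendsto (fun t : ℝ => ((N:ℂ)^2 / (1 + I*N*t)) ^ (-(1/2):ℂ)) l
        (𝓝 (((N:ℂ)^2) ^ (-(1/2):ℂ))) := by
      have hc : ContinuousAt (fun z : ℂ => z ^ (-(1/2):ℂ)) ((N:ℂ)^2) := by
        apply continuousAt_cpow_const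
        rw [Complex.mem_slitPlane_iff]
        left
        have : ((N:ℂ)^2) = (((N:ℝ)^2 : ℝ) : ℂ) := by push_cast; ring
        rw [this]
        simp only [Complex.ofReal_re]
        positivity
      have hcont : Tendsto (fun t : ℝ => (N:ℂ)^2 / (1 + I*N*t)) l (𝓝 ((N:ℂ)^2)) := by
        have : Tendsto (fun t : ℝ => (N:ℂ)^2 / (1 + I*N*t)) (𝓝 0)
            (𝓝 ((N:ℂ)^2 / (1 + I*N*(0:ℝ)))) := by
          apply Tendsto.div tendsto_const_nhds
          · apply Tendsto.const_add
            exact (Tendsto.mul tendsto_const_nhds (Complex.continuous_ofReal.tendsto 0)).congr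
              (fun t => by ring)
          · simp
        rw [hl]
        apply Tendsto.mono_left _ nhdsWithin_le_nhds
        convert this using 2
        push_cast
        ring
      exact hc.tendsto.comp hcont
    have hb3 : Tendsto (fun t : ℝ => jacobiTheta₂ 0 (-(1/(N:ℂ)) + I/((N:ℂ)^2*t))) l (𝓝 1) := by
      apply theta_tendsto (z := fun _ => (0:ℂ)) (fun _ => rfl)
      apply (hinv (N^2) (by positivity)).congr'
      filter_upwards [self_mem_nhdsWithin] with t ht
      have ht' : (0:ℝ) < t := ht
      have h4 : (I/((N:ℂ)^2*t)) = ((((N:ℝ)^2*t)⁻¹ : ℝ) : ℂ) * I := by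
        have h5 : ((N:ℂ)^2*t) = ((((N:ℝ)^2*t) : ℝ):ℂ) := by push_cast; ring
        rw [h5, div_eq_mul_inv, mul_comm, ← Complex.ofReal_inv]
      show ((N:ℝ)^2*t)⁻¹ = (-(1/(N:ℂ)) + I/((N:ℂ)^2*t)).im
      rw [h4, Complex.add_im, Complex.mul_I_im, Complex.ofReal_re]
      simp
    have := (tendsto_const_nhds (x := (2*N:ℂ))).mul hb1
    have := (this.mul hb2).mul hb3
    simpa [mul_assoc] using this
  -- uniqueness of limits
  haveI : l.NeBot := by rw [hl]; exact nhdsGT_neBot 0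
  have key : (∑ r ∈ Finset.range (2*N), Complex.exp ((π:ℂ) * I * r^2 / N))
      = (2*N : ℂ) * ((-I/(N:ℂ)) ^ (-(1/2) : ℂ)) * (((N:ℂ)^2) ^ (-(1/2) : ℂ)) :=
    tendsto_nhds_unique limA limB
  -- evaluate cpow terms
  have ev1 : ((-I/(N:ℂ)) ^ (-(1/2) : ℂ)) = (Real.sqrt N : ℂ) * Complex.exp ((π:ℂ) * I / 4) := by
    have h1 : (-I/(N:ℂ)) = (((1/N : ℝ)) : ℂ) * (-I) := by push_cast; ring
    rw [h1, cpow_ofReal_mul (by positivity) (by simp) (-(1/2):ℂ), negI_cpow]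
    congr 1
    rw [show (-(1/2) : ℂ) = ((-(1/2) : ℝ) : ℂ) by norm_num,
      ← Complex.ofReal_cpow (by positivity) (-(1/2) : ℝ)]
    congr 1
    rw [one_div, ← Real.rpow_neg_one (N:ℝ), ← Real.rpow_mul hNR.le,
      show (-1 : ℝ) * (-(1/2)) = (1/2 : ℝ) by norm_num, ← Real.sqrt_eq_rpow]
  have ev2 : (((N:ℂ)^2) ^ (-(1/2) : ℂ)) = ((N:ℝ) : ℂ)⁻¹ := by
    have h1 : ((N:ℂ)^2) = ((((N:ℝ)^2) : ℝ) : ℂ) := by push_cast; ring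
    rw [h1, show (-(1/2) : ℂ) = ((-(1/2) : ℝ) : ℂ) by norm_num,
      ← Complex.ofReal_cpow (by positivity) (-(1/2) : ℝ), ← Complex.ofReal_inv]
    congr 1
    rw [← Real.rpow_natCast (N:ℝ) 2, ← Real.rpow_mul hNR.le,
      show ((2:ℕ):ℝ) * (-(1/2)) = (-1 : ℝ) by norm_num, Real.rpow_neg_one]
  -- fold the sum
  obtain ⟨k, hk⟩ := hNe
  have fold : (∑ r ∈ Finset.range (2*N), Complex.exp ((π:ℂ) * I * r^2 / N))
      = 2 * ∑ p ∈ Finset.range N, Complex.exp ((π:ℂ) * I * p^2 / N) := by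
    rw [show (2*N : ℕ) = N + N by ring, Finset.sum_range_add, two_mul]
    congr 1
    apply Finset.sum_congr rfl
    intro p _
    have hexp : (π:ℂ) * I * ((N:ℂ) + p)^2 / N
        = ((k + p : ℕ) : ℂ) * (2*π*I) + (π:ℂ) * I * p^2 / N := by
      field_simp
      push_cast [hk]
      ring
    push_cast
    rw [hexp, Complex.exp_add]
    rw [show (((k+p : ℕ)) : ℂ) * (2*π*I) = (((k+p : ℕ) : ℤ) : ℂ) * (2*π*I) by push_cast; ring,
      Complex.exp_int_mul_two_pi_mul_I, one_mul]
  rw [fold] at key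
  rw [ev1, ev2] at key
  apply mul_left_cancel₀ (two_ne_zero : (2:ℂ) ≠ 0)
  rw [key]
  have hNR' : ((N:ℝ) : ℂ) = (N:ℂ) := by push_cast; ring
  rw [hNR']
  field_simp
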